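/- arXiv:2507.20296 — 3 statements merged into one kernel-verified Lean document; each statement's English description precedes it below -/
import Mathlib

section
/- Let g ≥ 1, let w_{j,k} ∈ ℂ for 1 ≤ j < k ≤ g be fixed, and let z ∈ ℂ^g. For t > 0 define the shifted theta series F(t) = Σ_{m∈ℤ^g} exp 2πi( (1/2) Σ_{j=1}^g m_j(m_j−1)·(it) + Σ_{j<k} m_j m_k w_{j,k} + Σ_{j=1}^g m_j z_j ). Then there exists t_0 > 0 such that for all t > t_0 the series converges absolutely, and as t → ∞, F(t) converges to the finite sum Σ_{m∈{0,1}^g} exp 2πi( Σ_{j<k} m_j m_k w_{j,k} + Σ_{j=1}^g m_j z_j ). -/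
open scoped Real

open Finset

/-- The general term of the shifted theta series with diagonal period entries `it`:
`exp 2πi( (1/2) Σ_j m_j(m_j−1)·(it) + Σ_{j<k} m_j m_k w_{j,k} + Σ_j m_j z_j )`. -/
noncomputable def shiftedThetaTerm (g : ℕ) (w : Fin g → Fin g → ℂ) (z : Fin g → ℂ)
    (t : ℝ) (m : Fin g → ℤ) : ℂ :=
  Complex.exp (2 * (π : ℂ) * Complex.I *
    ((1 / 2) * ∑ j, (m j : ℂ) * ((m j : ℂ) - 1) * (Complex.I * (t : ℂ))
      + ∑ pr ∈ Finset.univ.filter (fun pr : Fin g × Fin g => pr.1 < pr.2),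
          (m pr.1 : ℂ) * (m pr.2 : ℂ) * w pr.1 pr.2
      + ∑ j, (m j : ℂ) * z j))

namespace MThetaAux

/-- squared Euclidean norm of an integer vector -/
def Nf (g : ℕ) (m : Fin g → ℤ) : ℝ := ∑ j, ((m j : ℝ))^2

/-- the diagonal quadratic `Σ m_j (m_j - 1)` -/
def Sf (g : ℕ) (m : Fin g → ℤ) : ℤ := ∑ j, m j * (m j - 1)

/-- the `t`-independent part of the exponent (before multiplication by `2πi`) -/
noncomputable def Am (g : ℕ) (w : Fin g → Fin g → ℂ) (z : Fin g → ℂ) (m : Fin g → ℤ) : ℂ :=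
  (∑ pr ∈ Finset.univ.filter (fun pr : Fin g × Fin g => pr.1 < pr.2),
      (m pr.1 : ℂ) * (m pr.2 : ℂ) * w pr.1 pr.2)
    + ∑ j, (m j : ℂ) * z j

lemma Nf_nonneg (g : ℕ) (m : Fin g → ℤ) : 0 ≤ Nf g m :=
  Finset.sum_nonneg fun _ _ => sq_nonneg _

lemma coord_nonneg (n : ℤ) : 0 ≤ n * (n - 1) := by
  rcases le_or_gt n 0 with h | h
  · exact Int.mul_nonneg_iff.mpr (Or.inr ⟨h, by omega⟩)
  · exact mul_nonneg (by omega) (by omega)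

lemma Sf_nonneg (g : ℕ) (m : Fin g → ℤ) : 0 ≤ Sf g m :=
  Finset.sum_nonneg fun j _ => coord_nonneg (m j)

lemma Sf_half (g : ℕ) (m : Fin g → ℤ) : (Nf g m - g)/2 ≤ (Sf g m : ℝ) := by
  have hcast : (Sf g m : ℝ) = ∑ j, (m j : ℝ) * ((m j : ℝ) - 1) := by
    unfold Sf; push_cast
    exact Finset.sum_congr rfl fun j _ => by ring
  rw [hcast]
  have h1 : ∑ j : Fin g, (((m j : ℝ))^2 - 1)/2 ≤ ∑ j, (m j : ℝ) * ((m j : ℝ) - 1) := by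
    refine Finset.sum_le_sum fun j _ => ?_
    nlinarith [sq_nonneg ((m j : ℝ) - 1)]
  refine le_trans (le_of_eq ?_) h1
  rw [Nf, ← Finset.sum_div]
  congr 1
  rw [Finset.sum_sub_distrib]
  simp

lemma Sf_ge_two (g : ℕ) (m : Fin g → ℤ) (h : ∃ j, m j ≠ 0 ∧ m j ≠ 1) : 2 ≤ Sf g m := by
  obtain ⟨j, h0, h1⟩ := h
  have hj : 2 ≤ m j * (m j - 1) := by
    rcases le_or_gt (m j) 0 with h | h
    · have : m j ≤ -1 := by omega
      nlinarith
    · have : 2 ≤ m j := by omega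
      nlinarith
  calc (2:ℤ) ≤ m j * (m j - 1) := hj
    _ ≤ ∑ i, m i * (m i - 1) :=
        Finset.single_le_sum (f := fun i => m i * (m i - 1))
          (fun i _ => coord_nonneg (m i)) (Finset.mem_univ j)

lemma term_eq (g : ℕ) (w : Fin g → Fin g → ℂ) (z : Fin g → ℂ) (t : ℝ) (m : Fin g → ℤ) :
    shiftedThetaTerm g w z t m
      = Complex.exp (((-(π * t * (Sf g m : ℝ)) : ℝ) : ℂ) + 2 * (π:ℂ) * Complex.I * Am g w z m) := by
  unfold shiftedThetaTerm Am Sf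
  congr 1
  rw [← Finset.sum_mul]
  push_cast
  linear_combination (π * t * (∑ j, (m j : ℂ) * ((m j : ℂ) - 1))) * Complex.I_sq

lemma norm_term (g : ℕ) (w : Fin g → Fin g → ℂ) (z : Fin g → ℂ) (t : ℝ) (m : Fin g → ℤ) :
    ‖shiftedThetaTerm g w z t m‖
      = Real.exp (-(π * t * (Sf g m : ℝ)) + (2 * (π:ℂ) * Complex.I * Am g w z m).re) := by
  rw [term_eq, Complex.norm_exp]
  simp

lemma sq_le_Nf (g : ℕ) (m : Fin g → ℤ) (j : Fin g) : ((m j : ℝ))^2 ≤ Nf g m :=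
  Finset.single_le_sum (f := fun i => ((m i : ℝ))^2) (fun _ _ => sq_nonneg _) (Finset.mem_univ j)

lemma norm_mul_le_Nf (g : ℕ) (m : Fin g → ℤ) (a b : Fin g) :
    ‖((m a : ℂ))‖ * ‖((m b : ℂ))‖ ≤ Nf g m + 1 := by
  rw [Complex.norm_intCast, Complex.norm_intCast]
  nlinarith [sq_le_Nf g m a, sq_le_Nf g m b, sq_abs ((m a : ℝ)), sq_abs ((m b : ℝ)),
    sq_nonneg (|(m a : ℝ)| - |(m b : ℝ)|), Nf_nonneg g m]

lemma norm_le_Nf (g : ℕ) (m : Fin g → ℤ) (j : Fin g) : ‖((m j : ℂ))‖ ≤ Nf g m + 1 := by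
  rw [Complex.norm_intCast]
  nlinarith [sq_le_Nf g m j, sq_abs ((m j : ℝ)), sq_nonneg (|(m j : ℝ)| - 1),
    abs_nonneg ((m j : ℝ))]

lemma re_bound (g : ℕ) (w : Fin g → Fin g → ℂ) (z : Fin g → ℂ) :
    ∃ K : ℝ, 0 ≤ K ∧ ∀ m : Fin g → ℤ,
      (2 * (π:ℂ) * Complex.I * Am g w z m).re ≤ K * (Nf g m + 1) := by
  set F := Finset.univ.filter (fun pr : Fin g × Fin g => pr.1 < pr.2) with hF
  set W : ℝ := ∑ pr ∈ F, ‖w pr.1 pr.2‖ with hW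
  set Z : ℝ := ∑ j, ‖z j‖ with hZ
  have hW0 : 0 ≤ W := Finset.sum_nonneg fun _ _ => norm_nonneg _
  have hZ0 : 0 ≤ Z := Finset.sum_nonneg fun _ _ => norm_nonneg _
  refine ⟨2 * π * (W + Z), by positivity, fun m => ?_⟩
  have h1 : (2 * (π:ℂ) * Complex.I * Am g w z m).re ≤ ‖2 * (π:ℂ) * Complex.I * Am g w z m‖ :=
    Complex.re_le_norm _
  have h2 : ‖2 * (π:ℂ) * Complex.I * Am g w z m‖ = 2 * π * ‖Am g w z m‖ := by
    rw [norm_mul, norm_mul, norm_mul, Complex.norm_I]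
    simp [abs_of_nonneg Real.pi_nonneg]
  have hN1 : (0:ℝ) ≤ Nf g m + 1 := by linarith [Nf_nonneg g m]
  have hq : ‖∑ pr ∈ F, (m pr.1 : ℂ) * (m pr.2 : ℂ) * w pr.1 pr.2‖ ≤ (Nf g m + 1) * W := by
    refine le_trans (norm_sum_le _ _) ?_
    rw [hW, Finset.mul_sum]
    refine Finset.sum_le_sum fun pr _ => ?_
    rw [norm_mul, norm_mul]
    exact mul_le_mul_of_nonneg_right (norm_mul_le_Nf g m pr.1 pr.2) (norm_nonneg _)
  have hl : ‖∑ j, (m j : ℂ) * z j‖ ≤ (Nf g m + 1) * Z := by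
    refine le_trans (norm_sum_le _ _) ?_
    rw [hZ, Finset.mul_sum]
    refine Finset.sum_le_sum fun j _ => ?_
    rw [norm_mul]
    exact mul_le_mul_of_nonneg_right (norm_le_Nf g m j) (norm_nonneg _)
  have h3 : ‖Am g w z m‖ ≤ (Nf g m + 1) * (W + Z) := by
    refine le_trans (norm_add_le _ _) ?_
    calc ‖∑ pr ∈ F, (m pr.1 : ℂ) * (m pr.2 : ℂ) * w pr.1 pr.2‖ + ‖∑ j, (m j : ℂ) * z j‖
        ≤ (Nf g m + 1) * W + (Nf g m + 1) * Z := add_le_add hq hl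
      _ = (Nf g m + 1) * (W + Z) := by ring
  calc (2 * (π:ℂ) * Complex.I * Am g w z m).re
      ≤ 2 * π * ‖Am g w z m‖ := h2 ▸ h1
    _ ≤ 2 * π * ((Nf g m + 1) * (W + Z)) :=
        mul_le_mul_of_nonneg_left h3 (by positivity)
    _ = 2 * π * (W + Z) * (Nf g m + 1) := by ring

lemma summable_exp_neg_int_sq : Summable fun n : ℤ => Real.exp (-((n : ℝ))^2) := by
  have hnat : Summable fun n : ℕ => Real.exp (-((n : ℝ))^2) := by
    refine Summable.of_nonneg_of_le (fun n => (Real.exp_pos _).le)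
      (fun n => ?_) (summable_geometric_of_lt_one (r := Real.exp (-1)) (Real.exp_pos _).le
        (by rw [Real.exp_lt_one_iff]; norm_num))
    rw [← Real.exp_nat_mul]
    refine Real.exp_le_exp.mpr ?_
    rcases Nat.eq_zero_or_pos n with h | h
    · simp [h]
    · have h1 : (1:ℝ) ≤ n := by exact_mod_cast h
      nlinarith
  refine Summable.of_nat_of_neg ?_ ?_
  · simpa using hnat
  · have : ∀ n : ℕ, Real.exp (-((-(n:ℤ) : ℤ) : ℝ)^2) = Real.exp (-((n : ℝ))^2) := by
      intro n; push_cast; ring_nf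
    simpa [this] using hnat

lemma summable_exp_neg_Nf (g : ℕ) : Summable (fun m : Fin g → ℤ => Real.exp (-(Nf g m))) := by
  induction g with
  | zero =>
      exact summable_of_finite_support (Set.toFinite _)
  | succ n ih =>
      have key : Summable (fun p : ℤ × (Fin n → ℤ) =>
          Real.exp (-((p.1 : ℝ))^2) * Real.exp (-(Nf n p.2))) :=
        summable_exp_neg_int_sq.mul_of_nonneg ih (fun _ => (Real.exp_pos _).le)
          (fun _ => (Real.exp_pos _).le)
      have := (Fin.consEquiv fun _ => ℤ).symm.summable_iff.mpr key
      refine this.congr fun m => ?_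
      show Real.exp (-((m 0 : ℝ))^2) * Real.exp (-(Nf n (fun j => m j.succ)))
          = Real.exp (-(Nf (n+1) m))
      rw [← Real.exp_add]
      congr 1
      rw [Nf, Nf, Fin.sum_univ_succ]
      ring

/-- embedding of boolean vectors as 0-1 integer vectors -/
def iota (g : ℕ) (b : Fin g → Bool) : Fin g → ℤ := fun j => if b j then 1 else 0

lemma iota_inj (g : ℕ) : Function.Injective (iota g) := by
  intro a b h
  funext j
  have := congrFun h j
  cases ha : a j <;> cases hb : b j <;> simp [iota, ha, hb] at this ⊢

lemma iota_cast (g : ℕ) (b : Fin g → Bool) (j : Fin g) :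
    ((iota g b j : ℤ) : ℂ) = if b j then (1:ℂ) else 0 := by
  cases h : b j <;> simp [iota, h]

/-- the finset of 0-1 vectors -/
noncomputable def s01 (g : ℕ) : Finset (Fin g → ℤ) := Finset.image (iota g) Finset.univ

lemma not_mem_s01 (g : ℕ) (m : Fin g → ℤ) (h : m ∉ s01 g) : ∃ j, m j ≠ 0 ∧ m j ≠ 1 := by
  by_contra hc
  push_neg at hc
  apply h
  refine Finset.mem_image.mpr ⟨fun j => decide (m j = 1), Finset.mem_univ _, ?_⟩
  funext j
  rcases eq_or_ne (m j) 0 with h0 | h0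
  · simp [iota, h0]
  · have h1 := hc j h0
    simp [iota, h1]

lemma Sf_iota (g : ℕ) (b : Fin g → Bool) : Sf g (iota g b) = 0 :=
  Finset.sum_eq_zero fun j _ => by cases h : b j <;> simp [iota, h]

end MThetaAux

open MThetaAux in
/-- there is `t₀ > 0` such that the shifted theta series
`F(t) = Σ_{m∈ℤ^g} shiftedThetaTerm` converges absolutely for `t > t₀`, and as `t → ∞`,
`F(t)` converges to the finite sum over `m ∈ {0,1}^g` (the M-theta function). -/
theorem shiftedTheta_tendsto_MTheta (g : ℕ) (hg : 1 ≤ g)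
    (w : Fin g → Fin g → ℂ) (z : Fin g → ℂ) :
    ∃ t0 : ℝ, 0 < t0 ∧
      (∀ t : ℝ, t0 < t →
        Summable (fun m : Fin g → ℤ => ‖shiftedThetaTerm g w z t m‖)) ∧
      Filter.Tendsto (fun t : ℝ => ∑' m : Fin g → ℤ, shiftedThetaTerm g w z t m)
        Filter.atTop
        (nhds (∑ m : Fin g → Bool,
          Complex.exp (2 * (π : ℂ) * Complex.I *
            (∑ pr ∈ Finset.univ.filter (fun pr : Fin g × Fin g => pr.1 < pr.2),
                (if m pr.1 then (1 : ℂ) else 0) * (if m pr.2 then (1 : ℂ) else 0)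
                  * w pr.1 pr.2
              + ∑ j, (if m j then (1 : ℂ) else 0) * z j)))) := by
  classical
  obtain ⟨K, hK0, hK⟩ := re_bound g w z
  have hπ := Real.pi_pos
  set t0 : ℝ := 1 + 2*(K+1)/π with ht0def
  have ht0pos : 0 < t0 := by positivity
  have hmul : π * t0 = π + 2*(K+1) := by
    rw [ht0def]
    field_simp
  have ht0K : K + 1 ≤ π * t0 / 2 := by
    rw [hmul]; linarith
  clear_value t0
  clear ht0def hmul
  -- general norm bound for t ≥ t0
  have hbound : ∀ t : ℝ, t0 ≤ t → ∀ m : Fin g → ℤ,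
      ‖shiftedThetaTerm g w z t m‖
        ≤ Real.exp (π * t * g / 2 + K) * Real.exp (-(Nf g m)) := by
    intro t ht m
    rw [norm_term, ← Real.exp_add]
    refine Real.exp_le_exp.mpr ?_
    have htpos : 0 < t := lt_of_lt_of_le ht0pos ht
    have hπt : K + 1 ≤ π * t / 2 := by
      refine le_trans ht0K ?_
      have h := mul_le_mul_of_nonneg_left ht hπ.le
      linarith
    have hS := Sf_half g m
    have hN := Nf_nonneg g m
    have hc := hK m
    have hp1 : 0 ≤ (π * t) * ((Sf g m : ℝ) - (Nf g m - g)/2) :=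
      mul_nonneg (by positivity) (sub_nonneg.mpr hS)
    have hp2 : 0 ≤ Nf g m * (π * t / 2 - (K + 1)) :=
      mul_nonneg hN (sub_nonneg.mpr hπt)
    nlinarith [hc]
  -- summability
  have hsummable : ∀ t : ℝ, t0 ≤ t →
      Summable (fun m : Fin g → ℤ => ‖shiftedThetaTerm g w z t m‖) := by
    intro t ht
    exact Summable.of_nonneg_of_le (fun m => norm_nonneg _) (hbound t ht)
      ((summable_exp_neg_Nf g).mul_left _)
  refine ⟨t0, ht0pos, fun t ht => hsummable t ht.le, ?_⟩
  -- the limit value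
  set L : ℂ := ∑ m : Fin g → Bool,
      Complex.exp (2 * (π : ℂ) * Complex.I *
        (∑ pr ∈ Finset.univ.filter (fun pr : Fin g × Fin g => pr.1 < pr.2),
            (if m pr.1 then (1 : ℂ) else 0) * (if m pr.2 then (1 : ℂ) else 0)
              * w pr.1 pr.2
          + ∑ j, (if m j then (1 : ℂ) else 0) * z j)) with hLdef
  -- the finite sum over s01 equals L, for every t
  have hLsum : ∀ t : ℝ, ∑ m ∈ s01 g, shiftedThetaTerm g w z t m = L := by
    intro t
    rw [s01, Finset.sum_image (fun a _ b _ h => iota_inj g h), hLdef]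
    refine Finset.sum_congr rfl fun b _ => ?_
    rw [term_eq, Sf_iota]
    congr 1
    have hAm : Am g w z (iota g b)
        = (∑ pr ∈ Finset.univ.filter (fun pr : Fin g × Fin g => pr.1 < pr.2),
            (if b pr.1 then (1:ℂ) else 0) * (if b pr.2 then (1:ℂ) else 0) * w pr.1 pr.2)
          + ∑ j, (if b j then (1:ℂ) else 0) * z j := by
      rw [Am]
      congr 1
      · exact Finset.sum_congr rfl fun pr _ => by rw [iota_cast, iota_cast]
      · exact Finset.sum_congr rfl fun j _ => by rw [iota_cast]
    rw [hAm]
    push_cast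
    ring
  -- splitting off the tail
  have hsplit : ∀ t : ℝ, t0 ≤ t →
      (∑' m : Fin g → ℤ, shiftedThetaTerm g w z t m) - L
        = ∑' m : ((↑(s01 g) : Set (Fin g → ℤ))ᶜ : Set (Fin g → ℤ)), shiftedThetaTerm g w z t ↑m := by
    intro t ht
    have hsumm : Summable (shiftedThetaTerm g w z t) := (hsummable t ht).of_norm
    rw [← hsumm.sum_add_tsum_compl (s := s01 g), hLsum t]
    ring
  -- tail comparison
  set M : ℝ := ∑' m : ((↑(s01 g) : Set (Fin g → ℤ))ᶜ : Set (Fin g → ℤ)),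
      ‖shiftedThetaTerm g w z t0 ↑m‖ with hMdef
  have hterm_tail : ∀ t : ℝ, t0 ≤ t →
      ∀ m : ((↑(s01 g) : Set (Fin g → ℤ))ᶜ : Set (Fin g → ℤ)),
      ‖shiftedThetaTerm g w z t ↑m‖
        ≤ Real.exp (-(2*π)*(t - t0)) * ‖shiftedThetaTerm g w z t0 ↑m‖ := by
    intro t ht m
    rw [norm_term, norm_term, ← Real.exp_add]
    refine Real.exp_le_exp.mpr ?_
    have hm : (↑m : Fin g → ℤ) ∉ s01 g := fun h => m.2 (Finset.mem_coe.mpr h)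
    have h2S : (2:ℝ) ≤ (Sf g ↑m : ℝ) := by
      exact_mod_cast Sf_ge_two g ↑m (not_mem_s01 g ↑m hm)
    have hp : 0 ≤ π * ((t - t0) * ((Sf g (↑m : Fin g → ℤ) : ℝ) - 2)) :=
      mul_nonneg hπ.le (mul_nonneg (sub_nonneg.mpr ht) (by linarith))
    nlinarith
  -- tail bound
  have htail : ∀ t : ℝ, t0 ≤ t →
      ‖∑' m : ((↑(s01 g) : Set (Fin g → ℤ))ᶜ : Set (Fin g → ℤ)), shiftedThetaTerm g w z t ↑m‖
        ≤ Real.exp (-(2*π)*(t - t0)) * M := by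
    intro t ht
    have hsub : Summable (fun m : ((↑(s01 g) : Set (Fin g → ℤ))ᶜ : Set (Fin g → ℤ)) =>
        ‖shiftedThetaTerm g w z t ↑m‖) := (hsummable t ht).subtype _
    have hsub0 : Summable (fun m : ((↑(s01 g) : Set (Fin g → ℤ))ᶜ : Set (Fin g → ℤ)) =>
        ‖shiftedThetaTerm g w z t0 ↑m‖) := (hsummable t0 le_rfl).subtype _
    refine le_trans (norm_tsum_le_tsum_norm hsub) ?_
    calc ∑' m : ((↑(s01 g) : Set (Fin g → ℤ))ᶜ : Set (Fin g → ℤ)), ‖shiftedThetaTerm g w z t ↑m‖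
        ≤ ∑' m : ((↑(s01 g) : Set (Fin g → ℤ))ᶜ : Set (Fin g → ℤ)),
            Real.exp (-(2*π)*(t - t0)) * ‖shiftedThetaTerm g w z t0 ↑m‖ :=
          Summable.tsum_le_tsum (hterm_tail t ht) hsub (hsub0.mul_left _)
      _ = Real.exp (-(2*π)*(t - t0)) * M := by rw [hMdef, tsum_mul_left]
  -- the dominating function tends to 0
  have hzero : Filter.Tendsto (fun t : ℝ => Real.exp (-(2*π)*(t - t0)) * M)
      Filter.atTop (nhds 0) := by
    have h1 : Filter.Tendsto (fun t : ℝ => t - t0) Filter.atTop Filter.atTop :=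
      Filter.tendsto_atTop_add_const_right _ _ Filter.tendsto_id
    have h2 : Filter.Tendsto (fun t : ℝ => -(2*π)*(t - t0)) Filter.atTop Filter.atBot :=
      Filter.Tendsto.const_mul_atTop_of_neg (neg_lt_zero.mpr (by positivity)) h1
    have h3 := (Real.tendsto_exp_atBot.comp h2).mul_const M
    simpa using h3
  -- conclude
  have hdiff : Filter.Tendsto
      (fun t : ℝ => (∑' m : Fin g → ℤ, shiftedThetaTerm g w z t m) - L)
      Filter.atTop (nhds 0) := by
    refine squeeze_zero_norm' ?_ hzero
    filter_upwards [Filter.eventually_ge_atTop t0] with t ht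
    rw [hsplit t ht]
    exact htail t ht
  have := hdiff.add_const L
  simpa using this
end

section
/- Let κ_i, κ_j, λ_i, λ_j, λ_{i,j}, λ_{j,i} be real numbers, let ν_i, ν_j, ν_{i,j} be nonzero real numbers, and set a = λ_i − λ_{i,j}, b = λ_j − λ_{j,i}, c = ab + ν_{i,j}. Suppose complex numbers z, z_i, z_j, w satisfy the gluing relations (z − κ_i)(z_i − λ_i) = −ν_i, (z_i − λ_{i,j})(z_j − λ_{j,i}) = −ν_{i,j}, and (w − κ_j)(z_j − λ_j) = −ν_j. Then w − κ_j = ( a ν_j (z − κ_i) − ν_i ν_j ) / ( c (z − κ_i) − b ν_i ); equivalently, the map z ↦ w is the Möbius transformation given by the matrix [[cκ_j + aν_j, −cκ_iκ_j − ν_iν_j − aκ_iν_j − bκ_jν_i], [c, −cκ_i − bν_i]], whose determinant equals ν_i ν_j ν_{i,j}, so that after division by √(ν_i ν_j ν_{i,j}) it lies in SL₂(ℝ) when ν_i ν_j ν_{i,j} > 0. -/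
/-- the plumbing (gluing) relations
`(z − κ_i)(z_i − λ_i) = −ν_i`, `(z_i − λ_{i,j})(z_j − λ_{j,i}) = −ν_{i,j}`,
`(w − κ_j)(z_j − λ_j) = −ν_j`, with `a = λ_i − λ_{i,j}`, `b = λ_j − λ_{j,i}`,
`c = ab + ν_{i,j}`, imply
`w − κ_j = (aν_j(z − κ_i) − ν_iν_j)/(c(z − κ_i) − bν_i)`; equivalently `z ↦ w` is the
Möbius transformation of the matrix
`[[cκ_j + aν_j, −(cκ_iκ_j + ν_iν_j + aκ_iν_j + bκ_jν_i)], [c, −(cκ_i + bν_i)]]`,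
whose determinant is `ν_iν_jν_{i,j}`, so after division by `√(ν_iν_jν_{i,j})` it lies in
`SL₂(ℝ)` when `ν_iν_jν_{i,j} > 0`. Here `lᵢ = λ_i`, `lij = λ_{i,j}`, etc. -/
theorem plumbing_gives_schottkyGen (κi κj li lj lij lji νi νj νij : ℝ)
    (hνi : νi ≠ 0) (hνj : νj ≠ 0) (hνij : νij ≠ 0)
    (a b c : ℝ) (ha : a = li - lij) (hb : b = lj - lji) (hc : c = a * b + νij)
    (z zi zj w : ℂ)
    (h1 : (z - (κi : ℂ)) * (zi - (li : ℂ)) = -(νi : ℂ))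
    (h2 : (zi - (lij : ℂ)) * (zj - (lji : ℂ)) = -(νij : ℂ))
    (h3 : (w - (κj : ℂ)) * (zj - (lj : ℂ)) = -(νj : ℂ)) :
    w - (κj : ℂ)
      = ((a : ℂ) * (νj : ℂ) * (z - (κi : ℂ)) - (νi : ℂ) * (νj : ℂ)) /
          ((c : ℂ) * (z - (κi : ℂ)) - (b : ℂ) * (νi : ℂ)) ∧
    w = (((c : ℂ) * κj + (a : ℂ) * νj) * z
          - ((c : ℂ) * κi * κj + (νi : ℂ) * νj + (a : ℂ) * κi * νj + (b : ℂ) * κj * νi)) /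
        ((c : ℂ) * z - ((c : ℂ) * κi + (b : ℂ) * νi)) ∧
    Matrix.det !![c * κj + a * νj, -(c * κi * κj + νi * νj + a * κi * νj + b * κj * νi);
        c, -(c * κi + b * νi)] = νi * νj * νij ∧
    (0 < νi * νj * νij →
      Matrix.det ((Real.sqrt (νi * νj * νij))⁻¹ •
        !![c * κj + a * νj, -(c * κi * κj + νi * νj + a * κi * νj + b * κj * νi);
           c, -(c * κi + b * νi)]) = 1) := by

  have h2z : zi - (lij : ℂ) ≠ 0 := by
    intro h; apply hνij
    have := h2; rw [h, zero_mul] at this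
    exact_mod_cast (neg_eq_zero.mp this.symm)
  have h3z : zj - (lj : ℂ) ≠ 0 := by
    intro h; apply hνj
    have := h3; rw [h, mul_zero] at this
    exact_mod_cast (neg_eq_zero.mp this.symm)
  have e1 : (a : ℂ) * (z - κi) - νi = (zi - (lij : ℂ)) * (z - κi) := by
    subst ha; push_cast; linear_combination -h1
  have e2 : (c : ℂ) * (z - κi) - (b : ℂ) * νi
      = -((zj - (lj : ℂ)) * ((zi - (lij : ℂ)) * (z - κi))) := by
    subst ha hb hc; push_cast
    linear_combination (z - (κi:ℂ)) * h2 - ((lj:ℂ) - lji) * h1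
  have hD : (c : ℂ) * (z - κi) - (b : ℂ) * νi ≠ 0 := by
    have hu : z - (κi : ℂ) ≠ 0 := by
      intro h; apply hνi
      have := h1; rw [h, zero_mul] at this
      exact_mod_cast (neg_eq_zero.mp this.symm)
    rw [e2]
    exact neg_ne_zero.mpr (mul_ne_zero h3z (mul_ne_zero h2z hu))
  have key : w - (κj : ℂ)
      = ((a : ℂ) * (νj : ℂ) * (z - (κi : ℂ)) - (νi : ℂ) * (νj : ℂ)) /
          ((c : ℂ) * (z - (κi : ℂ)) - (b : ℂ) * (νi : ℂ)) := by
    rw [eq_div_iff hD]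
    linear_combination (w - (κj:ℂ)) * e2 - (zi - (lij:ℂ)) * (z - (κi:ℂ)) * h3 - (νj:ℂ) * e1
  refine ⟨key, ?_, ?_, ?_⟩
  · have hD' : (c : ℂ) * z - ((c : ℂ) * κi + (b : ℂ) * νi) ≠ 0 := by
      have : (c : ℂ) * z - ((c : ℂ) * κi + (b : ℂ) * νi)
          = (c : ℂ) * (z - κi) - (b : ℂ) * νi := by ring
      rw [this]; exact hD
    rw [eq_div_iff hD']
    have := key
    rw [eq_div_iff hD] at this
    linear_combination this
  · simp [Matrix.det_fin_two_of]
    subst hc; ring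
  · intro hpos
    have hs : Real.sqrt (νi * νj * νij) ≠ 0 :=
      ne_of_gt (Real.sqrt_pos.mpr hpos)
    rw [Matrix.det_smul]
    simp only [Matrix.det_fin_two_of, Fintype.card_fin]
    have hdet : (c * κj + a * νj) * -(c * κi + b * νi) -
        -(c * κi * κj + νi * νj + a * κi * νj + b * κj * νi) * c = νi * νj * νij := by
      subst hc; ring
    rw [hdet, inv_pow, Real.sq_sqrt hpos.le, inv_mul_cancel₀ (ne_of_gt hpos)]
end

section
/- Let 0 < N < M, let κ_1 < ... < κ_M be reals, and let A = (a_{k,j}) be an irreducible totally nonnegative N×M matrix of rank N in reduced row echelon form with pivot columns I_0 = {i_1 < ... < i_N}. Let P_1(A) = { [i_k, j] : j ∉ I_0, a_{k,j} ≠ 0 }, let g = |P_1(A)|, and let ℓ : P_1(A) → {1,...,g} be the bijection ordering the pairs by ℓ([i,k]) < ℓ([i,l]) if k > l and ℓ([i,·]) < ℓ([j,·]) if i < j. For p = ℓ([i_k, j]) define the phase φ_p(x,y,t) = (κ_j − κ_{i_k})x + (κ_j² − κ_{i_k}²)y + (κ_j³ − κ_{i_k}³)t, the constant e^{φ⁰_p}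 = a_{k,j} · Π_{l≠k}(κ_{i_l} − κ_j) / Π_{l≠k}(κ_{i_l} − κ_{i_k}), and φ̃_p = φ_p + φ⁰_p; and for p = ℓ([i_k, j]), q = ℓ([i_l, j']) with p < q define C_{p,q} = ((κ_{i_k} − κ_{i_l})(κ_j − κ_{j'})) / ((κ_{i_k} − κ_{j'})(κ_j − κ_{i_l})). Then the normalized τ-function τ(x,y,t) = Σ_{J} Δ_J(A) · ( Π_{k<l∈J}(κ_l − κ_k) / Π_{k<l∈I_0}(κ_l − κ_k) ) · exp( Σ_{j∈J} ξ_j − Σ_{i∈I_0} ξ_i ), summed over all N-element subsets J with Δ_J(A) ≠ 0, equals the M-theta function Σ_{m∈{0,1}^g} ( Π_{p<q, m_p=m_q=1} C_{p,q} ) · exp( Σ_{p: m_p=1} φ̃_p(x,y,t) ) for all (x,y,t) ∈ ℝ³, where ξ_j(x,y,t) = κ_j x + κ_j² y + κ_j³ t. -/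
set_option maxHeartbeats 1600000


open Finset

/-- The `N×N` minor of the `N×M` matrix `A` on the columns indexed by the
`N`-element subset `J ⊆ {1,…,M}` (the Plücker coordinate `Δ_J(A)`). -/
noncomputable def kpMinor {N M : ℕ} (A : Matrix (Fin N) (Fin M) ℝ) (I : Finset (Fin M)) : ℝ :=
  if h : I.card = N then
    Matrix.det (Matrix.of fun k l : Fin N => A k (I.orderIsoOfFin h l).1)
  else 0

/-- The phase `ξ(κ)(x,y,t) = κx + κ²y + κ³t`. -/
def kpXi (κ x y t : ℝ) : ℝ := κ * x + κ ^ 2 * y + κ ^ 3 * t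


/-- Product over upper pairs of a Fin n square. -/
lemma kp_prod_Ioi_eq_filter {n : ℕ} {β : Type*} [CommMonoid β] (f : Fin n → Fin n → β) :
    ∏ i, ∏ j ∈ Finset.Ioi i, f i j
      = ∏ p ∈ (Finset.univ : Finset (Fin n × Fin n)).filter (fun p => p.1 < p.2), f p.1 p.2 := by
  rw [Finset.prod_sigma' Finset.univ (fun i => Finset.Ioi i) f]
  apply Finset.prod_bij (fun p _ => (p.1, p.2))
  · rintro ⟨a, b⟩ h
    simp only [Finset.mem_sigma, Finset.mem_Ioi] at h
    simp [h.2]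
  · rintro ⟨a, b⟩ h ⟨a', b'⟩ h' hh
    simp only [Prod.mk.injEq] at hh
    obtain ⟨rfl, rfl⟩ := hh; rfl
  · rintro ⟨a, b⟩ h
    simp only [Finset.mem_filter] at h
    exact ⟨⟨a, b⟩, by simp [h.2], rfl⟩
  · intros; rfl

/-- Swap bijection for products over pairs. -/
lemma kp_prod_offDiag {α β : Type*} [DecidableEq α] [LinearOrder α] [CommMonoid β]
    (s : Finset α) (f : α × α → β) :
    ∏ p ∈ s.offDiag, f p
      = ∏ p ∈ s.offDiag.filter (fun p => p.1 < p.2), (f p * f p.swap) := by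
  classical
  rw [← Finset.prod_filter_mul_prod_filter_not s.offDiag (fun p => p.1 < p.2) f]
  rw [Finset.prod_mul_distrib]
  congr 1
  apply Finset.prod_bij (fun p _ => p.swap)
  · rintro ⟨a, b⟩ h
    simp only [Finset.mem_filter, Finset.mem_offDiag] at h ⊢
    obtain ⟨⟨ha, hb, hne⟩, hlt⟩ := h
    exact ⟨⟨hb, ha, (Ne.symm hne)⟩, lt_of_le_of_ne (not_lt.mp hlt) (Ne.symm hne)⟩
  · rintro ⟨a, b⟩ _ ⟨a', b'⟩ _ hh
    simpa [Prod.ext_iff, and_comm] using hh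
  · rintro ⟨a, b⟩ h
    refine ⟨(b, a), ?_, rfl⟩
    simp only [Finset.mem_filter, Finset.mem_offDiag] at h ⊢
    obtain ⟨⟨ha, hb, hne⟩, hlt⟩ := h
    exact ⟨⟨hb, ha, Ne.symm hne⟩, not_lt.mpr hlt.le⟩
  · rintro ⟨a, b⟩ _; simp

/-- Double product over erase equals product over offDiag. -/
lemma kp_prod_erase_offDiag {α β : Type*} [DecidableEq α] [CommMonoid β]
    (s : Finset α) (f : α → α → β) :
    ∏ x ∈ s, ∏ y ∈ s.erase x, f x y = ∏ p ∈ s.offDiag, f p.1 p.2 := by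
  rw [show s.offDiag = (s ×ˢ s).filter (fun a : α × α => a.1 ≠ a.2) by ext; simp [and_assoc], Finset.prod_filter,
    Finset.prod_product' s s (fun x y => if x ≠ y then f x y else 1)]
  apply Finset.prod_congr rfl
  intro x _
  rw [Finset.prod_ite, Finset.prod_const_one, mul_one]
  congr 1
  ext y
  simp [Finset.mem_erase, ne_comm, eq_comm]
  tauto

/-- Vandermonde sign identity. -/
lemma kp_vandermonde_sign {n : ℕ} (y : Fin n → ℝ) (σ : Equiv.Perm (Fin n)) :
    ∏ p ∈ (Finset.univ : Finset (Fin n × Fin n)).filter (fun p => p.1 < p.2),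
        (y (σ p.2) - y (σ p.1))
      = (Equiv.Perm.sign σ : ℤ) *
        ∏ p ∈ (Finset.univ : Finset (Fin n × Fin n)).filter (fun p => p.1 < p.2),
          (y p.2 - y p.1) := by
  have h1 : Matrix.vandermonde (y ∘ σ) = (Matrix.vandermonde y).submatrix σ id := rfl
  have h2 := Matrix.det_permute σ (Matrix.vandermonde y)
  rw [← h1, Matrix.det_vandermonde, Matrix.det_vandermonde] at h2
  simp only [Function.comp] at h2
  rw [kp_prod_Ioi_eq_filter (fun i j => y (σ j) - y (σ i))] at h2
  rw [kp_prod_Ioi_eq_filter (fun i j => y j - y i)] at h2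
  simpa using h2

/-- Convert a product over increasing pairs of `J` to pairs of `Fin N` via a strictly
monotone enumeration. -/
lemma kp_offDiag_prod {N M : ℕ} {β : Type*} [CommMonoid β] (e : Fin N → Fin M)
    (he : StrictMono e) (J : Finset (Fin M)) (hJ : ∀ j, j ∈ J ↔ ∃ k, e k = j)
    (f : Fin M → Fin M → β) :
    ∏ pr ∈ J.offDiag.filter (fun pr => pr.1 < pr.2), f pr.1 pr.2
      = ∏ p ∈ (Finset.univ : Finset (Fin N × Fin N)).filter (fun p => p.1 < p.2),
          f (e p.1) (e p.2) := by
  symm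
  apply Finset.prod_bij (fun (p : Fin N × Fin N) _ => (e p.1, e p.2))
  · rintro ⟨a, b⟩ h
    simp only [Finset.mem_filter, Finset.mem_univ, true_and] at h
    simp only [Finset.mem_filter, Finset.mem_offDiag]
    exact ⟨⟨(hJ _).mpr ⟨a, rfl⟩, (hJ _).mpr ⟨b, rfl⟩, fun hh => (ne_of_lt h) (he.injective hh)⟩,
      he h⟩
  · rintro ⟨a, b⟩ _ ⟨a', b'⟩ _ hh
    simp only [Prod.mk.injEq] at hh
    exact Prod.ext (he.injective hh.1) (he.injective hh.2)
  · rintro ⟨a, b⟩ h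
    simp only [Finset.mem_filter, Finset.mem_offDiag] at h
    obtain ⟨⟨ha, hb, _⟩, hlt⟩ := h
    obtain ⟨k, rfl⟩ := (hJ _).mp ha
    obtain ⟨l, rfl⟩ := (hJ _).mp hb
    refine ⟨(k, l), ?_, rfl⟩
    simp only [Finset.mem_filter, Finset.mem_univ, true_and]
    exact he.lt_iff_lt.mp hlt
  · intros; rfl

/-- Convert a sum over `J` to a sum over `Fin N` via an enumeration. -/
lemma kp_sum_enum {N M : ℕ} {β : Type*} [AddCommMonoid β] (e : Fin N → Fin M)
    (he : Function.Injective e) (J : Finset (Fin M)) (hJ : ∀ j, j ∈ J ↔ ∃ k, e k = j)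
    (f : Fin M → β) :
    ∑ j ∈ J, f j = ∑ k, f (e k) := by
  have hJ' : J = Finset.image e Finset.univ := by
    ext j; simp [hJ j, eq_comm]
  rw [hJ', Finset.sum_image (fun a _ b _ h => he h)]

/-- Convert a product over `J` to a product over `Fin N` via an enumeration. -/
lemma kp_prod_enum {N M : ℕ} {β : Type*} [CommMonoid β] (e : Fin N → Fin M)
    (he : Function.Injective e) (J : Finset (Fin M)) (hJ : ∀ j, j ∈ J ↔ ∃ k, e k = j)
    (f : Fin M → β) :
    ∏ j ∈ J, f j = ∏ k, f (e k) := by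
  have hJ' : J = Finset.image e Finset.univ := by
    ext j; simp [hJ j, eq_comm]
  rw [hJ', Finset.prod_image (fun a _ b _ h => he h)]



/-- Enumeration of an `N`-element subset of `Fin M`. -/
lemma kp_enum_spec {N M : ℕ} (J : Finset (Fin M)) (h : J.card = N) :
    StrictMono (fun k => ((J.orderIsoOfFin h k : {x // x ∈ J}) : Fin M)) ∧
      ∀ j, j ∈ J ↔ ∃ k, ((J.orderIsoOfFin h k : {x // x ∈ J}) : Fin M) = j := by
  constructor
  · intro a b hab
    exact (J.orderIsoOfFin h).lt_iff_lt.mpr hab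
  · intro j
    constructor
    · intro hj
      obtain ⟨k, hk⟩ := (J.orderIsoOfFin h).surjective ⟨j, hj⟩
      exact ⟨k, by rw [hk]⟩
    · rintro ⟨k, rfl⟩
      exact (J.orderIsoOfFin h k).2

/-- The τ-sum over subsets equals the master sum over column choices. -/
lemma kp_lhs_eq_master {N M : ℕ} (κ : Fin M → ℝ) (hκ : Function.Injective κ)
    (A : Matrix (Fin N) (Fin M) ℝ) (E : Fin M → ℝ) :
    (∑ c ∈ (Finset.univ : Finset (Fin N → Fin M)),
        (∏ k, A k (c k)) *
          (∏ p ∈ (Finset.univ : Finset (Fin N × Fin N)).filter (fun p => p.1 < p.2),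
            (κ (c p.2) - κ (c p.1))) *
          (∏ k, E (c k)))
    = ∑ J ∈ Finset.powersetCard N (Finset.univ : Finset (Fin M)),
      kpMinor A J *
        (∏ pr ∈ J.offDiag.filter (fun pr => pr.1 < pr.2), (κ pr.2 - κ pr.1)) *
        (∏ j ∈ J, E j) := by
  classical
  -- restrict to injective choices
  rw [← Finset.sum_filter_of_ne (s := Finset.univ)
      (p := fun c : Fin N → Fin M => Function.Injective c)
      (fun c _ hne => by
        by_contra hinj
        apply hne
        simp only [Function.Injective, not_forall] at hinj
        obtain ⟨k, l, hkl, hne'⟩ := hinj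
        rcases lt_or_gt_of_ne hne' with hlt | hlt
        · have : (κ (c l) - κ (c k)) = 0 := by rw [hkl]; ring
          rw [Finset.prod_eq_zero (i := (k, l)) (by simp [hlt]) this]
          ring
        · have : (κ (c k) - κ (c l)) = 0 := by rw [hkl]; ring
          rw [Finset.prod_eq_zero (i := (l, k)) (by simp [hlt]) this]
          ring)]
  -- group by image
  rw [← Finset.sum_fiberwise_of_maps_to (g := fun c : Fin N → Fin M => Finset.image c Finset.univ)
      (t := Finset.powersetCard N (Finset.univ : Finset (Fin M)))
      (fun c hc => by
        simp only [Finset.mem_filter, Finset.mem_univ, true_and] at hc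
        rw [Finset.mem_powersetCard]
        exact ⟨Finset.subset_univ _, by
          rw [Finset.card_image_of_injective _ hc, Finset.card_univ, Fintype.card_fin]⟩)]
  apply Finset.sum_congr rfl
  intro J hJ
  rw [Finset.mem_powersetCard] at hJ
  obtain ⟨-, hcard⟩ := hJ
  set e : Fin N → Fin M := fun k => ((J.orderIsoOfFin hcard k : {x // x ∈ J}) : Fin M) with he_def
  obtain ⟨hmono, hspec⟩ := kp_enum_spec J hcard
  have heinj : Function.Injective e := hmono.injective
  -- fiber sum equals a sum over permutations
  have hfiber : ∑ c ∈ (Finset.univ.filter (fun c : Fin N → Fin M => Function.Injective c)).filter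
        (fun c => Finset.image c Finset.univ = J),
      (∏ k, A k (c k)) *
        (∏ p ∈ (Finset.univ : Finset (Fin N × Fin N)).filter (fun p => p.1 < p.2),
          (κ (c p.2) - κ (c p.1))) *
        (∏ k, E (c k))
      = ∑ σ : Equiv.Perm (Fin N),
        (∏ k, A k (e (σ k))) *
          (∏ p ∈ (Finset.univ : Finset (Fin N × Fin N)).filter (fun p => p.1 < p.2),
            (κ (e (σ p.2)) - κ (e (σ p.1)))) *
          (∏ k, E (e (σ k))) := by
    symm
    apply Finset.sum_bij (fun (σ : Equiv.Perm (Fin N)) _ => fun k => e (σ k))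
    · intro σ _
      simp only [Finset.mem_filter, Finset.mem_univ, true_and]
      constructor
      · exact heinj.comp σ.injective
      · ext j
        simp only [Finset.mem_image, Finset.mem_univ, true_and]
        constructor
        · rintro ⟨k, rfl⟩; exact (hspec _).mpr ⟨σ k, rfl⟩
        · intro hj
          obtain ⟨k, hk⟩ := (hspec j).mp hj
          exact ⟨σ.symm k, by simp only [Equiv.apply_symm_apply]; exact hk⟩
    · intro σ _ σ' _ hh
      exact Equiv.ext fun k => heinj (congrFun hh k)
    · intro c hc
      simp only [Finset.mem_filter, Finset.mem_univ, true_and] at hc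
      obtain ⟨hcinj, hcim⟩ := hc
      have hm : ∀ k, c k ∈ J := fun k => by
        rw [← hcim]; exact Finset.mem_image_of_mem c (Finset.mem_univ k)
      set m : Fin N → Fin N := fun k => (J.orderIsoOfFin hcard).symm ⟨c k, hm k⟩ with hm_def
      have hminj : Function.Injective m := by
        intro a b hab
        apply hcinj
        have := congrArg (fun z => ((J.orderIsoOfFin hcard z : {x // x ∈ J}) : Fin M)) hab
        simpa [hm_def] using this
      obtain ⟨σ, hσ⟩ : ∃ σ : Equiv.Perm (Fin N), ∀ k, σ k = m k :=
        ⟨Equiv.ofBijective m (Finite.injective_iff_bijective.mp hminj), fun k => rfl⟩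
      refine ⟨σ, Finset.mem_univ _, funext fun k => ?_⟩
      show e (σ k) = c k
      rw [hσ k]
      show ((J.orderIsoOfFin hcard) ((J.orderIsoOfFin hcard).symm ⟨c k, hm k⟩) : Fin M) = c k
      rw [OrderIso.apply_symm_apply]
    · intro σ _; rfl
  rw [hfiber]
  -- evaluate the permutation sum via Leibniz and the Vandermonde sign identity
  have hdet : kpMinor A J = ∑ σ : Equiv.Perm (Fin N),
      ((Equiv.Perm.sign σ : ℤ) : ℝ) * ∏ k, A k (e (σ k)) := by
    rw [kpMinor, dif_pos hcard]
    rw [← Matrix.det_transpose, Matrix.det_apply']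
    apply Finset.sum_congr rfl
    intro σ _
    rfl
  calc ∑ σ : Equiv.Perm (Fin N),
        (∏ k, A k (e (σ k))) *
          (∏ p ∈ (Finset.univ : Finset (Fin N × Fin N)).filter (fun p => p.1 < p.2),
            (κ (e (σ p.2)) - κ (e (σ p.1)))) *
          (∏ k, E (e (σ k)))
      = ∑ σ : Equiv.Perm (Fin N),
        (((Equiv.Perm.sign σ : ℤ) : ℝ) * ∏ k, A k (e (σ k))) *
          (∏ p ∈ (Finset.univ : Finset (Fin N × Fin N)).filter (fun p => p.1 < p.2),
            (κ (e p.2) - κ (e p.1))) *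
          (∏ k, E (e k)) := by
        apply Finset.sum_congr rfl
        intro σ _
        rw [kp_vandermonde_sign (fun k => κ (e k)) σ]
        rw [Equiv.prod_comp σ (fun k => E (e k))]
        ring
    _ = kpMinor A J *
          (∏ pr ∈ J.offDiag.filter (fun pr => pr.1 < pr.2), (κ pr.2 - κ pr.1)) *
          (∏ j ∈ J, E j) := by
        rw [← Finset.sum_mul, ← Finset.sum_mul, ← hdet]
        rw [kp_offDiag_prod e hmono J hspec (fun a b => κ b - κ a)]
        rw [kp_prod_enum e heinj J hspec E]


/-- for an irreducible totally nonnegative `N×M` matrix `A` of rank `N` in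
reduced row echelon form with pivot columns `piv`, with `P₁(A)` the set of pairs
`(k, j)` with `j` a non-pivot column and `A k j ≠ 0`, `g = |P₁(A)|`, and `ℓ` the ordering
bijection of `P₁(A)` (pairs ordered by pivot row, and within a row by decreasing column),
the normalized τ-function equals the M-theta function: a finite sum over `m ∈ {0,1}^g`
(i.e. over subsets `S ⊆ {1,…,g}`) of products of cross-ratio coefficients `C_{p,q}`
times exponentials of the shifted phases `φ̃_p = φ_p + φ⁰_p`. -/
theorem tau_eq_MTheta {N M : ℕ} (hN : 0 < N) (hNM : N < M)
    (κ : Fin M → ℝ) (hκ : StrictMono κ)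
    (A : Matrix (Fin N) (Fin M) ℝ) (hrank : A.rank = N)
    (piv : Fin N → Fin M) (hpiv : StrictMono piv)
    (hpiv1 : ∀ k, A k (piv k) = 1)
    (hleft : ∀ k j, j < piv k → A k j = 0)
    (hcol : ∀ k k', k' ≠ k → A k' (piv k) = 0)
    (hirr_row : ∀ k, ∃ j, j ≠ piv k ∧ A k j ≠ 0)
    (hirr_col : ∀ j, ∃ k, A k j ≠ 0)
    (hTNN : ∀ J ∈ Finset.powersetCard N (Finset.univ : Finset (Fin M)), 0 ≤ kpMinor A J)
    (P1 : Finset (Fin N × Fin M))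
    (hP1 : P1 = Finset.univ.filter (fun pr : Fin N × Fin M =>
      pr.2 ∉ Finset.image piv Finset.univ ∧ A pr.1 pr.2 ≠ 0))
    (g : ℕ) (hg : g = P1.card)
    (ℓ : {pr // pr ∈ P1} ≃ Fin g)
    (hℓ : ∀ pr qr : {pr // pr ∈ P1},
      (pr.1.1 < qr.1.1 ∨ (pr.1.1 = qr.1.1 ∧ qr.1.2 < pr.1.2)) → ℓ pr < ℓ qr)
    (φ : Fin g → ℝ → ℝ → ℝ → ℝ)
    (hφ : ∀ r x y t, φ r x y t
      = kpXi (κ (ℓ.symm r).1.2) x y t - kpXi (κ (piv (ℓ.symm r).1.1)) x y t)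
    (E0 : Fin g → ℝ)   -- `E0 r = exp(φ⁰_r)`
    (hE0 : ∀ r, E0 r
      = A (ℓ.symm r).1.1 (ℓ.symm r).1.2 *
          (∏ l ∈ Finset.univ.erase (ℓ.symm r).1.1, (κ (piv l) - κ (ℓ.symm r).1.2)) /
          (∏ l ∈ Finset.univ.erase (ℓ.symm r).1.1, (κ (piv l) - κ (piv (ℓ.symm r).1.1))))
    (C : Fin g → Fin g → ℝ)
    (hC : ∀ r s, C r s
      = ((κ (piv (ℓ.symm r).1.1) - κ (piv (ℓ.symm s).1.1)) *
         (κ (ℓ.symm r).1.2 - κ (ℓ.symm s).1.2)) /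
        ((κ (piv (ℓ.symm r).1.1) - κ (ℓ.symm s).1.2) *
         (κ (ℓ.symm r).1.2 - κ (piv (ℓ.symm s).1.1)))) :
    ∀ x y t : ℝ,
      (∑ J ∈ (Finset.powersetCard N (Finset.univ : Finset (Fin M))).filter
          (fun J => kpMinor A J ≠ 0),
        kpMinor A J *
          ((∏ pr ∈ J.offDiag.filter (fun pr => pr.1 < pr.2), (κ pr.2 - κ pr.1)) /
           (∏ pr ∈ (Finset.image piv Finset.univ).offDiag.filter (fun pr => pr.1 < pr.2),
              (κ pr.2 - κ pr.1))) *
          Real.exp ((∑ j ∈ J, kpXi (κ j) x y t) - ∑ k, kpXi (κ (piv k)) x y t))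
      = ∑ S : Finset (Fin g),
          (∏ pr ∈ Finset.univ.filter
              (fun pr : Fin g × Fin g => pr.1 < pr.2 ∧ pr.1 ∈ S ∧ pr.2 ∈ S),
            C pr.1 pr.2) *
          (∏ p ∈ S, E0 p) *
          Real.exp (∑ p ∈ S, φ p x y t) := by
  intro x y t
  classical
  have hκinj : Function.Injective κ := hκ.injective
  set Q : Finset (Fin N × Fin N) := Finset.univ.filter (fun p => p.1 < p.2) with hQdef
  set Eξ : Fin M → ℝ := fun j => Real.exp (kpXi (κ j) x y t) with hEξdef
  set W0 : ℝ := ∏ p ∈ Q, (κ (piv p.2) - κ (piv p.1)) with hW0def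
  set Ec : ℝ := ∏ k, Eξ (piv k) with hEcdef
  have hW0ne : W0 ≠ 0 := by
    apply Finset.prod_ne_zero_iff.mpr
    intro p hp
    simp only [hQdef, Finset.mem_filter] at hp
    exact sub_ne_zero_of_ne (ne_of_gt (hκ (hpiv hp.2)))
  have hEξpos : ∀ j, Eξ j ≠ 0 := fun j => (Real.exp_pos _).ne'
  have hEcne : Ec ≠ 0 := Finset.prod_ne_zero_iff.mpr (fun k _ => hEξpos _)
  set Master : ℝ := ∑ c ∈ (Finset.univ : Finset (Fin N → Fin M)),
      (∏ k, A k (c k)) *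
        (∏ p ∈ Q, (κ (c p.2) - κ (c p.1))) *
        (∏ k, Eξ (c k)) with hMasterdef
  have hL : (∑ J ∈ (Finset.powersetCard N (Finset.univ : Finset (Fin M))).filter
          (fun J => kpMinor A J ≠ 0),
        kpMinor A J *
          ((∏ pr ∈ J.offDiag.filter (fun pr => pr.1 < pr.2), (κ pr.2 - κ pr.1)) /
           (∏ pr ∈ (Finset.image piv Finset.univ).offDiag.filter (fun pr => pr.1 < pr.2),
              (κ pr.2 - κ pr.1))) *
          Real.exp ((∑ j ∈ J, kpXi (κ j) x y t) - ∑ k, kpXi (κ (piv k)) x y t))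
      = Master * (W0⁻¹ * Ec⁻¹) := by
    have hD0 : ∏ pr ∈ (Finset.image piv Finset.univ).offDiag.filter (fun pr => pr.1 < pr.2),
        (κ pr.2 - κ pr.1) = W0 := by
      rw [hW0def, hQdef]
      exact kp_offDiag_prod piv hpiv _ (fun j => by simp [eq_comm]) (fun a b => κ b - κ a)
    rw [Finset.sum_filter_of_ne (fun J _ hne => by
      intro h0
      apply hne
      rw [h0]
      ring)]
    calc ∑ J ∈ Finset.powersetCard N (Finset.univ : Finset (Fin M)),
          kpMinor A J *
            ((∏ pr ∈ J.offDiag.filter (fun pr => pr.1 < pr.2), (κ pr.2 - κ pr.1)) /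
             (∏ pr ∈ (Finset.image piv Finset.univ).offDiag.filter (fun pr => pr.1 < pr.2),
                (κ pr.2 - κ pr.1))) *
            Real.exp ((∑ j ∈ J, kpXi (κ j) x y t) - ∑ k, kpXi (κ (piv k)) x y t)
        = ∑ J ∈ Finset.powersetCard N (Finset.univ : Finset (Fin M)),
            (kpMinor A J *
              (∏ pr ∈ J.offDiag.filter (fun pr => pr.1 < pr.2), (κ pr.2 - κ pr.1)) *
              (∏ j ∈ J, Eξ j)) * (W0⁻¹ * Ec⁻¹) := by
          apply Finset.sum_congr rfl
          intro J _
          rw [hD0, Real.exp_sub, Real.exp_sum]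
          have h2 : Real.exp (∑ k, kpXi (κ (piv k)) x y t) = Ec := by
            rw [hEcdef, Real.exp_sum]
          rw [h2]
          have h3 : ∏ j ∈ J, Real.exp (kpXi (κ j) x y t) = ∏ j ∈ J, Eξ j := rfl
          rw [h3, div_eq_mul_inv, div_eq_mul_inv]
          ring
      _ = Master * (W0⁻¹ * Ec⁻¹) := by
          rw [← Finset.sum_mul, ← kp_lhs_eq_master κ hκinj A Eξ, hMasterdef]
  -- facts about elements of `P1`
  have hP1spec : ∀ p : {pr // pr ∈ P1},
      p.1.2 ∉ Finset.image piv Finset.univ ∧ A p.1.1 p.1.2 ≠ 0 := by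
    intro p
    have hp : p.1 ∈ P1 := p.2
    simp only [hP1, Finset.mem_filter, Finset.mem_univ, true_and] at hp
    exact hp
  -- nonvanishing of a term forces admissibility and injectivity
  have hne_adm : ∀ c : Fin N → Fin M,
      ((∏ k, A k (c k)) * (∏ p ∈ Q, (κ (c p.2) - κ (c p.1))) * (∏ k, Eξ (c k)))
          * (W0⁻¹ * Ec⁻¹) ≠ 0 →
      (∀ k, c k = piv k ∨ (k, c k) ∈ P1) ∧ Function.Injective c := by
    intro c hne0
    have hne : (∏ k, A k (c k)) * (∏ p ∈ Q, (κ (c p.2) - κ (c p.1))) * (∏ k, Eξ (c k)) ≠ 0 :=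
      fun h => hne0 (by rw [h]; ring)
    constructor
    · intro k
      by_contra hk
      push_neg at hk
      obtain ⟨hk1, hk2⟩ := hk
      apply hne
      have hA : A k (c k) = 0 := by
        rw [hP1] at hk2
        simp only [Finset.mem_filter, Finset.mem_univ, true_and, not_and, not_not] at hk2
        by_cases hmem : c k ∈ Finset.image piv Finset.univ
        · obtain ⟨k', -, hk'⟩ := Finset.mem_image.mp hmem
          have hkk' : k ≠ k' := fun h => hk1 (by rw [← hk', h])
          rw [← hk']
          exact hcol k' k hkk'
        · exact hk2 hmem
      rw [Finset.prod_eq_zero (Finset.mem_univ k) hA]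
      ring
    · intro a b hab
      by_contra hne'
      apply hne
      rcases lt_or_gt_of_ne hne' with h | h
      · rw [Finset.prod_eq_zero (i := (a, b))
          (by simp only [hQdef, Finset.mem_filter, Finset.mem_univ, true_and]; exact h)
          (by rw [hab]; ring)]
        ring
      · rw [Finset.prod_eq_zero (i := (b, a))
          (by simp only [hQdef, Finset.mem_filter, Finset.mem_univ, true_and]; exact h)
          (by rw [hab]; ring)]
        ring
  have key : (∑ S : Finset (Fin g),
        (∏ pr ∈ Finset.univ.filter
            (fun pr : Fin g × Fin g => pr.1 < pr.2 ∧ pr.1 ∈ S ∧ pr.2 ∈ S),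
          C pr.1 pr.2) *
        (∏ p ∈ S, E0 p) *
        Real.exp (∑ p ∈ S, φ p x y t))
      = Master * (W0⁻¹ * Ec⁻¹) := by
    set FF : Finset (Fin g) → ℝ := fun S =>
      (∏ pr ∈ Finset.univ.filter
          (fun pr : Fin g × Fin g => pr.1 < pr.2 ∧ pr.1 ∈ S ∧ pr.2 ∈ S),
        C pr.1 pr.2) * (∏ p ∈ S, E0 p) * Real.exp (∑ p ∈ S, φ p x y t) with hFFdef
    have hcongr : ∑ S : Finset (Fin g), FF S
        = ∑ T : Finset {pr // pr ∈ P1}, FF (T.map ℓ.toEmbedding) :=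
      (Fintype.sum_equiv (Equiv.finsetCongr ℓ) (fun T => FF (T.map ℓ.toEmbedding)) FF
        (fun T => by rw [Equiv.finsetCongr_apply])).symm
    -- nonvanishing forces distinct rows and columns
    have hTgood : ∀ T : Finset {pr // pr ∈ P1}, FF (T.map ℓ.toEmbedding) ≠ 0 →
        ∀ p : {pr // pr ∈ P1}, p ∈ T → ∀ q : {pr // pr ∈ P1}, q ∈ T →
          (p.1.1 = q.1.1 ∨ p.1.2 = q.1.2) → p = q := by
      intro T hne p hp q hq hpq
      by_contra hne'
      apply hne
      have hℓne : ℓ p ≠ ℓ q := fun h => hne' (ℓ.injective h)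
      have hCzero : C (ℓ p) (ℓ q) = 0 ∧ C (ℓ q) (ℓ p) = 0 := by
        rw [hC (ℓ p) (ℓ q), hC (ℓ q) (ℓ p), Equiv.symm_apply_apply, Equiv.symm_apply_apply]
        rcases hpq with h | h
        · constructor
          · rw [h, sub_self, zero_mul, zero_div]
          · rw [h, sub_self, zero_mul, zero_div]
        · constructor
          · rw [h, sub_self, mul_zero, zero_div]
          · rw [h, sub_self, mul_zero, zero_div]
      have hpmem : ℓ p ∈ T.map ℓ.toEmbedding := Finset.mem_map.mpr ⟨p, hp, rfl⟩
      have hqmem : ℓ q ∈ T.map ℓ.toEmbedding := Finset.mem_map.mpr ⟨q, hq, rfl⟩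
      simp only [hFFdef]
      rcases lt_or_gt_of_ne hℓne with h | h
      · rw [Finset.prod_eq_zero (i := (ℓ p, ℓ q))
          (by simp only [Finset.mem_filter, Finset.mem_univ, true_and]; exact ⟨h, hpmem, hqmem⟩)
          hCzero.1]
        ring
      · rw [Finset.prod_eq_zero (i := (ℓ q, ℓ p))
          (by simp only [Finset.mem_filter, Finset.mem_univ, true_and]; exact ⟨h, hqmem, hpmem⟩)
          hCzero.2]
        ring
    -- the value identity for admissible injective column choices
    have hval : ∀ c : Fin N → Fin M, (∀ k, c k = piv k ∨ (k, c k) ∈ P1) →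
        Function.Injective c →
        ((∏ k, A k (c k)) * (∏ p ∈ Q, (κ (c p.2) - κ (c p.1))) * (∏ k, Eξ (c k)))
            * (W0⁻¹ * Ec⁻¹)
          = FF ((Finset.univ.filter
              (fun p : {pr // pr ∈ P1} => p.1.2 = c p.1.1)).map ℓ.toEmbedding) := by
      intro c hadm hinj
      set Tc : Finset {pr // pr ∈ P1} :=
        Finset.univ.filter (fun p : {pr // pr ∈ P1} => p.1.2 = c p.1.1) with hTcdef
      set K : Finset (Fin N) := Finset.univ.filter (fun k => c k ≠ piv k) with hKdef
      set Kc : Finset (Fin N) := Finset.univ.filter (fun k => c k = piv k) with hKcdef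
      have hKmem : ∀ k, k ∈ K ↔ c k ≠ piv k := fun k => by simp [hKdef]
      have hKcmem : ∀ k, k ∈ Kc ↔ c k = piv k := fun k => by simp [hKcdef]
      have hKP1 : ∀ k, k ∈ K → (k, c k) ∈ P1 :=
        fun k hk => (hadm k).resolve_left ((hKmem k).mp hk)
      have hKnp : ∀ k, k ∈ K → c k ∉ Finset.image piv Finset.univ :=
        fun k hk => (hP1spec ⟨(k, c k), hKP1 k hk⟩).1
      have huv : ∀ k, k ∈ K → ∀ l, κ (piv l) - κ (c k) ≠ 0 := by
        intro k hk l h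
        exact (hKnp k hk) (by
          rw [← hκinj (sub_eq_zero.mp h)]
          exact Finset.mem_image_of_mem piv (Finset.mem_univ l))
      have huu : ∀ k l : Fin N, k ≠ l → κ (piv k) - κ (piv l) ≠ 0 := by
        intro k l hkl h
        exact hkl (hpiv.injective (hκinj (sub_eq_zero.mp h)))
      have hvv : ∀ k l : Fin N, k ≠ l → κ (c k) - κ (c l) ≠ 0 := by
        intro k l hkl h
        exact hkl (hinj (hκinj (sub_eq_zero.mp h)))
      have hKKc : ∀ k, k ∈ K → k ∉ Kc := by
        intro k hk hk'
        exact ((hKmem k).mp hk) ((hKcmem k).mp hk')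
      -- transfer between `Tc` and `K`
      have htranss : ∀ F : Fin N × Fin M → ℝ, ∑ p ∈ Tc, F p.1 = ∑ k ∈ K, F (k, c k) := by
        intro F
        apply Finset.sum_bij (fun (p : {pr // pr ∈ P1}) (_ : p ∈ Tc) => p.1.1)
        · intro p hp
          rw [hTcdef] at hp
          have hp2 := (Finset.mem_filter.mp hp).2
          rw [hKmem]
          intro hcp
          exact (hP1spec p).1 (by
            rw [hp2, hcp]
            exact Finset.mem_image_of_mem piv (Finset.mem_univ p.1.1))
        · intro p hp q hq h
          have hp2 := (Finset.mem_filter.mp hp).2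
          have hq2 := (Finset.mem_filter.mp hq).2
          exact Subtype.ext (Prod.ext h (by rw [hp2, hq2, h]))
        · intro k hk
          refine ⟨⟨(k, c k), hKP1 k hk⟩, ?_, rfl⟩
          rw [hTcdef]
          simp
        · intro p hp
          have hp2 := (Finset.mem_filter.mp hp).2
          have : p.1 = (p.1.1, c p.1.1) := Prod.ext rfl hp2
          rw [← this]
      have htransp : ∀ F : Fin N × Fin M → ℝ, ∏ p ∈ Tc, F p.1 = ∏ k ∈ K, F (k, c k) := by
        intro F
        apply Finset.prod_bij (fun (p : {pr // pr ∈ P1}) (_ : p ∈ Tc) => p.1.1)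
        · intro p hp
          rw [hTcdef] at hp
          have hp2 := (Finset.mem_filter.mp hp).2
          rw [hKmem]
          intro hcp
          exact (hP1spec p).1 (by
            rw [hp2, hcp]
            exact Finset.mem_image_of_mem piv (Finset.mem_univ p.1.1))
        · intro p hp q hq h
          have hp2 := (Finset.mem_filter.mp hp).2
          have hq2 := (Finset.mem_filter.mp hq).2
          exact Subtype.ext (Prod.ext h (by rw [hp2, hq2, h]))
        · intro k hk
          refine ⟨⟨(k, c k), hKP1 k hk⟩, ?_, rfl⟩
          rw [hTcdef]
          simp
        · intro p hp
          have hp2 := (Finset.mem_filter.mp hp).2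
          have : p.1 = (p.1.1, c p.1.1) := Prod.ext rfl hp2
          rw [← this]
      -- (i) the phase sum
      have hφsum : ∑ p ∈ Tc.map ℓ.toEmbedding, φ p x y t
          = (∑ k, kpXi (κ (c k)) x y t) - ∑ k, kpXi (κ (piv k)) x y t := by
        rw [Finset.sum_map]
        have h1 : ∀ q ∈ Tc, φ (ℓ.toEmbedding q) x y t
            = kpXi (κ q.1.2) x y t - kpXi (κ (piv q.1.1)) x y t := by
          intro q _
          show φ (ℓ q) x y t = _
          rw [hφ, Equiv.symm_apply_apply]
        rw [Finset.sum_congr rfl h1,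
          htranss (fun pr => kpXi (κ pr.2) x y t - kpXi (κ (piv pr.1)) x y t)]
        rw [Finset.sum_subset (Finset.subset_univ K) (fun k _ hk => by
          rw [hKmem, not_not] at hk
          rw [hk, sub_self])]
        rw [Finset.sum_sub_distrib]
      have hexp : Real.exp (∑ p ∈ Tc.map ℓ.toEmbedding, φ p x y t)
          = (∏ k, Eξ (c k)) * Ec⁻¹ := by
        rw [hφsum, Real.exp_sub, Real.exp_sum, div_eq_mul_inv, hEcdef, Real.exp_sum]
      -- (ii) the E0 product
      have hE0prod : ∏ p ∈ Tc.map ℓ.toEmbedding, E0 p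
          = (∏ k ∈ K, A k (c k)) *
            (∏ k ∈ K, ∏ l ∈ Finset.univ.erase k, (κ (piv l) - κ (c k))) /
            (∏ k ∈ K, ∏ l ∈ Finset.univ.erase k, (κ (piv l) - κ (piv k))) := by
        rw [Finset.prod_map]
        have h1 : ∀ q ∈ Tc, E0 (ℓ.toEmbedding q)
            = (A q.1.1 q.1.2 * ∏ l ∈ Finset.univ.erase q.1.1, (κ (piv l) - κ q.1.2)) /
              (∏ l ∈ Finset.univ.erase q.1.1, (κ (piv l) - κ (piv q.1.1))) := by
          intro q _
          show E0 (ℓ q) = _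
          rw [hE0, Equiv.symm_apply_apply]
        rw [Finset.prod_congr rfl h1,
          htransp (fun pr => (A pr.1 pr.2 * ∏ l ∈ Finset.univ.erase pr.1, (κ (piv l) - κ pr.2)) /
            (∏ l ∈ Finset.univ.erase pr.1, (κ (piv l) - κ (piv pr.1))))]
        rw [Finset.prod_div_distrib, Finset.prod_mul_distrib]
      -- (iii) the cross-ratio product
      have hCprod : (∏ pr ∈ Finset.univ.filter
            (fun pr : Fin g × Fin g => pr.1 < pr.2 ∧
              pr.1 ∈ Tc.map ℓ.toEmbedding ∧ pr.2 ∈ Tc.map ℓ.toEmbedding),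
          C pr.1 pr.2)
          = ∏ p ∈ Q.filter (fun p => p.1 ∈ K ∧ p.2 ∈ K),
              ((κ (piv p.1) - κ (piv p.2)) * (κ (c p.1) - κ (c p.2))) /
              ((κ (piv p.1) - κ (c p.2)) * (κ (c p.1) - κ (piv p.2))) := by
        symm
        apply Finset.prod_bij (fun (p : Fin N × Fin N)
          (hp : p ∈ Q.filter (fun p => p.1 ∈ K ∧ p.2 ∈ K)) =>
            ((ℓ ⟨(p.1, c p.1), hKP1 p.1 (Finset.mem_filter.mp hp).2.1⟩ : Fin g),
             (ℓ ⟨(p.2, c p.2), hKP1 p.2 (Finset.mem_filter.mp hp).2.2⟩ : Fin g)))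
        · intro p hp
          obtain ⟨hpQ, hp1, hp2⟩ := Finset.mem_filter.mp hp
          rw [hQdef] at hpQ
          have hlt := (Finset.mem_filter.mp hpQ).2
          simp only [Finset.mem_filter, Finset.mem_univ, true_and]
          refine ⟨hℓ _ _ (Or.inl hlt), ?_, ?_⟩
          · exact Finset.mem_map.mpr ⟨_, by rw [hTcdef]; simp, rfl⟩
          · exact Finset.mem_map.mpr ⟨_, by rw [hTcdef]; simp, rfl⟩
        · intro p hp q hq h
          simp only [Prod.mk.injEq] at h
          have e1 := congrArg (fun z : {pr // pr ∈ P1} => z.1.1) (ℓ.injective h.1)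
          have e2 := congrArg (fun z : {pr // pr ∈ P1} => z.1.1) (ℓ.injective h.2)
          simp only at e1 e2
          exact Prod.ext e1 e2
        · intro pr hpr
          obtain ⟨hlt, hm1, hm2⟩ := Finset.mem_filter.mp hpr |>.2
          obtain ⟨q1, hq1T, hq1⟩ := Finset.mem_map.mp hm1
          obtain ⟨q2, hq2T, hq2⟩ := Finset.mem_map.mp hm2
          rw [hTcdef] at hq1T hq2T
          have hc1 := (Finset.mem_filter.mp hq1T).2
          have hc2 := (Finset.mem_filter.mp hq2T).2
          have hk1 : q1.1.1 ∈ K := by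
            rw [hKmem]
            intro hcp
            exact (hP1spec q1).1 (by
              rw [hc1, hcp]
              exact Finset.mem_image_of_mem piv (Finset.mem_univ _))
          have hk2 : q2.1.1 ∈ K := by
            rw [hKmem]
            intro hcp
            exact (hP1spec q2).1 (by
              rw [hc2, hcp]
              exact Finset.mem_image_of_mem piv (Finset.mem_univ _))
          have hne12 : q1 ≠ q2 := by
            intro h
            rw [← hq1, ← hq2, h] at hlt
            exact lt_irrefl _ hlt
          have hrowne : q1.1.1 ≠ q2.1.1 := by
            intro h
            exact hne12 (Subtype.ext (Prod.ext h (by rw [hc1, hc2, h])))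
          have hrowlt : q1.1.1 < q2.1.1 := by
            rcases lt_or_gt_of_ne hrowne with h | h
            · exact h
            · exfalso
              have hq1' : (ℓ q1 : Fin g) = pr.1 := hq1
              have hq2' : (ℓ q2 : Fin g) = pr.2 := hq2
              have := hℓ q2 q1 (Or.inl h)
              rw [hq1', hq2'] at this
              exact absurd hlt (not_lt.mpr this.le)
          refine ⟨(q1.1.1, q2.1.1), ?_, ?_⟩
          · simp only [Finset.mem_filter, hQdef, Finset.mem_univ, true_and]
            exact ⟨hrowlt, hk1, hk2⟩
          · have he1 : (⟨(q1.1.1, c q1.1.1), hKP1 q1.1.1 hk1⟩ : {pr // pr ∈ P1}) = q1 :=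
              Subtype.ext (Prod.ext rfl hc1.symm)
            have he2 : (⟨(q2.1.1, c q2.1.1), hKP1 q2.1.1 hk2⟩ : {pr // pr ∈ P1}) = q2 :=
              Subtype.ext (Prod.ext rfl hc2.symm)
            exact Prod.ext ((congrArg ℓ he1).trans hq1) ((congrArg ℓ he2).trans hq2)
        · intro p hp
          rw [hC, Equiv.symm_apply_apply, Equiv.symm_apply_apply]
      -- splitting of the double products over `K` and its complement
      have herase : ∀ k ∈ K, (Finset.univ : Finset (Fin N)).erase k = K.erase k ∪ Kc := by
        intro k hk
        ext l
        simp only [Finset.mem_erase, Finset.mem_union, Finset.mem_univ, and_true,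
          hKdef, hKcdef, Finset.mem_filter, true_and]
        constructor
        · intro hlk
          by_cases hcl : c l = piv l
          · exact Or.inr hcl
          · exact Or.inl ⟨hlk, hcl⟩
        · rintro (⟨h, -⟩ | h)
          · exact h
          · intro heq
            rw [heq] at h
            exact ((hKmem k).mp hk) h
      have hdisj : ∀ k : Fin N, Disjoint (K.erase k) Kc := by
        intro k
        rw [Finset.disjoint_left]
        intro l hl hlc
        exact ((hKmem l).mp (Finset.mem_of_mem_erase hl)) ((hKcmem l).mp hlc)
      have hQKK : Q.filter (fun p => p.1 ∈ K ∧ p.2 ∈ K)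
          = K.offDiag.filter (fun p => p.1 < p.2) := by
        ext p
        simp only [Finset.mem_filter, Finset.mem_offDiag, hQdef, Finset.mem_univ, true_and]
        constructor
        · rintro ⟨hlt, h1, h2⟩
          exact ⟨⟨h1, h2, ne_of_lt hlt⟩, hlt⟩
        · rintro ⟨⟨h1, h2, -⟩, hlt⟩
          exact ⟨hlt, h1, h2⟩
      have hsplitN : ∏ k ∈ K, ∏ l ∈ Finset.univ.erase k, (κ (piv l) - κ (c k))
          = (∏ p ∈ K.offDiag.filter (fun p => p.1 < p.2),
              ((κ (piv p.2) - κ (c p.1)) * (κ (piv p.1) - κ (c p.2))))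
            * ∏ p ∈ K ×ˢ Kc, (κ (piv p.2) - κ (c p.1)) := by
        calc ∏ k ∈ K, ∏ l ∈ Finset.univ.erase k, (κ (piv l) - κ (c k))
            = ∏ k ∈ K, ((∏ l ∈ K.erase k, (κ (piv l) - κ (c k)))
                * ∏ l ∈ Kc, (κ (piv l) - κ (c k))) := by
              refine Finset.prod_congr rfl fun k hk => ?_
              rw [herase k hk, Finset.prod_union (hdisj k)]
          _ = (∏ k ∈ K, ∏ l ∈ K.erase k, (κ (piv l) - κ (c k)))
              * ∏ k ∈ K, ∏ l ∈ Kc, (κ (piv l) - κ (c k)) := Finset.prod_mul_distrib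
          _ = (∏ p ∈ K.offDiag.filter (fun p => p.1 < p.2),
                ((κ (piv p.2) - κ (c p.1)) * (κ (piv p.1) - κ (c p.2))))
              * ∏ p ∈ K ×ˢ Kc, (κ (piv p.2) - κ (c p.1)) := by
              rw [kp_prod_erase_offDiag K (fun k l => κ (piv l) - κ (c k)),
                kp_prod_offDiag K (fun p => κ (piv p.2) - κ (c p.1)),
                ← Finset.prod_product' K Kc (fun k l => κ (piv l) - κ (c k))]
              simp only [Prod.fst_swap, Prod.snd_swap]
      have hsplitD : ∏ k ∈ K, ∏ l ∈ Finset.univ.erase k, (κ (piv l) - κ (piv k))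
          = (∏ p ∈ K.offDiag.filter (fun p => p.1 < p.2),
              ((κ (piv p.2) - κ (piv p.1)) * (κ (piv p.1) - κ (piv p.2))))
            * ∏ p ∈ K ×ˢ Kc, (κ (piv p.2) - κ (piv p.1)) := by
        calc ∏ k ∈ K, ∏ l ∈ Finset.univ.erase k, (κ (piv l) - κ (piv k))
            = ∏ k ∈ K, ((∏ l ∈ K.erase k, (κ (piv l) - κ (piv k)))
                * ∏ l ∈ Kc, (κ (piv l) - κ (piv k))) := by
              refine Finset.prod_congr rfl fun k hk => ?_
              rw [herase k hk, Finset.prod_union (hdisj k)]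
          _ = (∏ k ∈ K, ∏ l ∈ K.erase k, (κ (piv l) - κ (piv k)))
              * ∏ k ∈ K, ∏ l ∈ Kc, (κ (piv l) - κ (piv k)) := Finset.prod_mul_distrib
          _ = _ := by
              rw [kp_prod_erase_offDiag K (fun k l => κ (piv l) - κ (piv k)),
                kp_prod_offDiag K (fun p => κ (piv p.2) - κ (piv p.1)),
                ← Finset.prod_product' K Kc (fun k l => κ (piv l) - κ (piv k))]
              simp only [Prod.fst_swap, Prod.snd_swap]
      -- mixed pairs
      have hmix : ∏ p ∈ K ×ˢ Kc, ((κ (piv p.2) - κ (c p.1)) / (κ (piv p.2) - κ (piv p.1)))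
          = ∏ p ∈ Q.filter (fun p => ¬(p.1 ∈ K ∧ p.2 ∈ K) ∧ (p.1 ∈ K ∨ p.2 ∈ K)),
              ((κ (c p.2) - κ (c p.1)) / (κ (piv p.2) - κ (piv p.1))) := by
        apply Finset.prod_bij (fun (p : Fin N × Fin N) (_ : p ∈ K ×ˢ Kc) =>
          if p.1 < p.2 then p else (p.2, p.1))
        · intro p hp
          obtain ⟨h1, h2⟩ := Finset.mem_product.mp hp
          have hne : p.1 ≠ p.2 := fun h => hKKc p.1 h1 (h ▸ h2)
          by_cases hlt : p.1 < p.2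
          · rw [if_pos hlt]
            simp only [Finset.mem_filter, hQdef, Finset.mem_univ, true_and]
            refine ⟨hlt, ?_, Or.inl h1⟩
            rintro ⟨-, hc2⟩
            exact hKKc p.2 hc2 h2
          · rw [if_neg hlt]
            have hlt' : p.2 < p.1 := lt_of_le_of_ne (not_lt.mp hlt) (Ne.symm hne)
            simp only [Finset.mem_filter, hQdef, Finset.mem_univ, true_and]
            refine ⟨hlt', ?_, Or.inr h1⟩
            rintro ⟨hc2, -⟩
            exact hKKc p.2 hc2 h2
        · intro p hp q hq h
          obtain ⟨hp1, hp2⟩ := Finset.mem_product.mp hp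
          obtain ⟨hq1, hq2⟩ := Finset.mem_product.mp hq
          by_cases h1 : p.1 < p.2
          · rw [if_pos h1] at h
            by_cases h2 : q.1 < q.2
            · rwa [if_pos h2] at h
            · rw [if_neg h2] at h
              exfalso
              have he : p.1 = q.2 := congrArg Prod.fst h
              exact hKKc p.1 hp1 (he ▸ hq2)
          · rw [if_neg h1] at h
            by_cases h2 : q.1 < q.2
            · rw [if_pos h2] at h
              exfalso
              have he : p.2 = q.1 := congrArg Prod.fst h
              exact hKKc q.1 hq1 (he ▸ hp2)
            · rw [if_neg h2] at h
              have e1 : p.2 = q.2 := congrArg Prod.fst h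
              have e2 : p.1 = q.1 := congrArg Prod.snd h
              exact Prod.ext e2 e1
        · intro pr hpr
          obtain ⟨hprQ, hnb, hor⟩ := Finset.mem_filter.mp hpr
          rw [hQdef] at hprQ
          have hlt : pr.1 < pr.2 := (Finset.mem_filter.mp hprQ).2
          rcases hor with h1 | h2
          · have h2' : pr.2 ∈ Kc := by
              rw [hKcmem]
              by_contra hcc
              exact hnb ⟨h1, (hKmem pr.2).mpr hcc⟩
            exact ⟨(pr.1, pr.2), Finset.mem_product.mpr ⟨h1, h2'⟩, by rw [if_pos hlt]⟩
          · have h1' : pr.1 ∈ Kc := by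
              rw [hKcmem]
              by_contra hcc
              exact hnb ⟨(hKmem pr.1).mpr hcc, h2⟩
            refine ⟨(pr.2, pr.1), Finset.mem_product.mpr ⟨h2, h1'⟩, ?_⟩
            rw [if_neg (not_lt.mpr hlt.le)]
        · intro p hp
          obtain ⟨hp1, hp2⟩ := Finset.mem_product.mp hp
          have hc2 : c p.2 = piv p.2 := (hKcmem p.2).mp hp2
          by_cases hlt : p.1 < p.2
          · rw [if_pos hlt, hc2]
          · rw [if_neg hlt]
            show (κ (piv p.2) - κ (c p.1)) / (κ (piv p.2) - κ (piv p.1))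
              = (κ (c p.1) - κ (c p.2)) / (κ (piv p.1) - κ (piv p.2))
            rw [hc2, ← neg_sub (κ (c p.1)) (κ (piv p.2)),
              ← neg_sub (κ (piv p.1)) (κ (piv p.2)), neg_div_neg_eq]
      -- the per-pair cross-ratio identity
      have hper : ∀ p ∈ K.offDiag.filter (fun p : Fin N × Fin N => p.1 < p.2),
          (((κ (piv p.1) - κ (piv p.2)) * (κ (c p.1) - κ (c p.2))) /
            ((κ (piv p.1) - κ (c p.2)) * (κ (c p.1) - κ (piv p.2)))) *
          (((κ (piv p.2) - κ (c p.1)) * (κ (piv p.1) - κ (c p.2))) /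
            ((κ (piv p.2) - κ (piv p.1)) * (κ (piv p.1) - κ (piv p.2))))
          = (κ (c p.2) - κ (c p.1)) / (κ (piv p.2) - κ (piv p.1)) := by
        intro p hp
        obtain ⟨hod, hlt⟩ := Finset.mem_filter.mp hp
        obtain ⟨hK1, hK2, hne⟩ := Finset.mem_offDiag.mp hod
        have h1 : κ (piv p.1) - κ (c p.2) ≠ 0 := huv p.2 hK2 p.1
        have h2 : κ (c p.1) - κ (piv p.2) ≠ 0 :=
          sub_ne_zero.mpr (Ne.symm (sub_ne_zero.mp (huv p.1 hK1 p.2)))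
        have h3 : κ (piv p.2) - κ (piv p.1) ≠ 0 := huu p.2 p.1 (Ne.symm hne)
        have h4 : κ (piv p.1) - κ (piv p.2) ≠ 0 := huu p.1 p.2 hne
        field_simp
        ring
      -- the master rational identity
      have hmain : (∏ p ∈ Q.filter (fun p => p.1 ∈ K ∧ p.2 ∈ K),
            ((κ (piv p.1) - κ (piv p.2)) * (κ (c p.1) - κ (c p.2))) /
            ((κ (piv p.1) - κ (c p.2)) * (κ (c p.1) - κ (piv p.2))))
          * ((∏ k ∈ K, ∏ l ∈ Finset.univ.erase k, (κ (piv l) - κ (c k)))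
             / (∏ k ∈ K, ∏ l ∈ Finset.univ.erase k, (κ (piv l) - κ (piv k))))
          = (∏ p ∈ Q, (κ (c p.2) - κ (c p.1))) * W0⁻¹ := by
        rw [hQKK, hsplitN, hsplitD, mul_div_mul_comm, ← Finset.prod_div_distrib,
          ← Finset.prod_div_distrib, ← mul_assoc, ← Finset.prod_mul_distrib,
          Finset.prod_congr rfl hper, hmix, ← hQKK]
        have hnone : ∏ p ∈ Q.filter
              (fun p => ¬(p.1 ∈ K ∧ p.2 ∈ K) ∧ ¬(p.1 ∈ K ∨ p.2 ∈ K)),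
            ((κ (c p.2) - κ (c p.1)) / (κ (piv p.2) - κ (piv p.1))) = 1 := by
          apply Finset.prod_eq_one
          intro p hp
          obtain ⟨hpQ, -, hno⟩ := Finset.mem_filter.mp hp
          rw [hQdef] at hpQ
          have hlt : p.1 < p.2 := (Finset.mem_filter.mp hpQ).2
          push_neg at hno
          have hc1 : c p.1 = piv p.1 := by
            have := hno.1
            rw [hKmem, not_not] at this
            exact this
          have hc2 : c p.2 = piv p.2 := by
            have := hno.2
            rw [hKmem, not_not] at this
            exact this
          rw [hc1, hc2]
          exact div_self (huu p.2 p.1 (ne_of_gt hlt))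
        have hQsplit : (∏ p ∈ Q, ((κ (c p.2) - κ (c p.1)) / (κ (piv p.2) - κ (piv p.1))))
            = (∏ p ∈ Q.filter (fun p => p.1 ∈ K ∧ p.2 ∈ K),
                ((κ (c p.2) - κ (c p.1)) / (κ (piv p.2) - κ (piv p.1))))
              * ((∏ p ∈ Q.filter (fun p => ¬(p.1 ∈ K ∧ p.2 ∈ K) ∧ (p.1 ∈ K ∨ p.2 ∈ K)),
                  ((κ (c p.2) - κ (c p.1)) / (κ (piv p.2) - κ (piv p.1))))
                * ∏ p ∈ Q.filter (fun p => ¬(p.1 ∈ K ∧ p.2 ∈ K) ∧ ¬(p.1 ∈ K ∨ p.2 ∈ K)),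
                  ((κ (c p.2) - κ (c p.1)) / (κ (piv p.2) - κ (piv p.1)))) := by
          rw [← Finset.prod_filter_mul_prod_filter_not Q (fun p => p.1 ∈ K ∧ p.2 ∈ K)
            (fun p => (κ (c p.2) - κ (c p.1)) / (κ (piv p.2) - κ (piv p.1)))]
          congr 1
          rw [← Finset.prod_filter_mul_prod_filter_not
            (Q.filter (fun p => ¬(p.1 ∈ K ∧ p.2 ∈ K))) (fun p => p.1 ∈ K ∨ p.2 ∈ K)
            (fun p => (κ (c p.2) - κ (c p.1)) / (κ (piv p.2) - κ (piv p.1))),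
            Finset.filter_filter (fun p : Fin N × Fin N => ¬(p.1 ∈ K ∧ p.2 ∈ K))
              (fun p => p.1 ∈ K ∨ p.2 ∈ K),
            Finset.filter_filter (fun p : Fin N × Fin N => ¬(p.1 ∈ K ∧ p.2 ∈ K))
              (fun p => ¬(p.1 ∈ K ∨ p.2 ∈ K))]
        have hcomb : (∏ p ∈ Q.filter (fun p => p.1 ∈ K ∧ p.2 ∈ K),
              ((κ (c p.2) - κ (c p.1)) / (κ (piv p.2) - κ (piv p.1))))
            * (∏ p ∈ Q.filter (fun p => ¬(p.1 ∈ K ∧ p.2 ∈ K) ∧ (p.1 ∈ K ∨ p.2 ∈ K)),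
                ((κ (c p.2) - κ (c p.1)) / (κ (piv p.2) - κ (piv p.1))))
            = ∏ p ∈ Q, ((κ (c p.2) - κ (c p.1)) / (κ (piv p.2) - κ (piv p.1))) := by
          rw [hQsplit, hnone, mul_one]
        rw [hcomb, Finset.prod_div_distrib, ← hW0def, div_eq_mul_inv]
      -- assemble everything
      simp only [hFFdef]
      rw [hCprod, hE0prod, hexp]
      have hAK : (∏ k, A k (c k)) = ∏ k ∈ K, A k (c k) :=
        (Finset.prod_subset (Finset.subset_univ K) (fun k _ hk => by
          rw [hKmem, not_not] at hk
          rw [hk, hpiv1])).symm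
      rw [hAK]
      linear_combination (-((∏ k ∈ K, A k (c k)) * (∏ k, Eξ (c k)) * Ec⁻¹)) * hmain
    rw [hcongr, hMasterdef, Finset.sum_mul]
    symm
    apply Finset.sum_bij_ne_zero (i := fun c _ _ =>
      Finset.univ.filter (fun p : {pr // pr ∈ P1} => p.1.2 = c p.1.1))
    · intro a h₁ h₂
      exact Finset.mem_univ _
    · -- injectivity
      intro c₁ m₁ h₁ c₂ m₂ h₂ heq
      obtain ⟨hadm₁, -⟩ := hne_adm c₁ h₁
      obtain ⟨hadm₂, -⟩ := hne_adm c₂ h₂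
      funext k
      have hmem : ∀ (c c' : Fin N → Fin M), (∀ k, c k = piv k ∨ (k, c k) ∈ P1) →
          Finset.univ.filter (fun p : {pr // pr ∈ P1} => p.1.2 = c p.1.1)
            = Finset.univ.filter (fun p : {pr // pr ∈ P1} => p.1.2 = c' p.1.1) →
          ∀ k, c k ≠ piv k → c' k = c k := by
        intro c c' hadm heq' k hk
        obtain hmem' | hmem' := hadm k
        · exact absurd hmem' hk
        · have hp : (⟨(k, c k), hmem'⟩ : {pr // pr ∈ P1}) ∈
              Finset.univ.filter (fun p : {pr // pr ∈ P1} => p.1.2 = c p.1.1) := by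
            simp
          rw [heq'] at hp
          simpa using (Finset.mem_filter.mp hp).2.symm
      by_cases hk1 : c₁ k = piv k
      · by_cases hk2 : c₂ k = piv k
        · rw [hk1, hk2]
        · exact hmem c₂ c₁ hadm₂ heq.symm k hk2
      · exact (hmem c₁ c₂ hadm₁ heq k hk1).symm
    · -- surjectivity
      intro T _ hgne
      have hGood := hTgood T hgne
      set c : Fin N → Fin M := fun k =>
        if h : ∃ p : {pr // pr ∈ P1}, p ∈ T ∧ p.1.1 = k then h.choose.1.2 else piv k
        with hcdef
      have hcspec : ∀ k, (∃ p : {pr // pr ∈ P1}, p ∈ T ∧ p.1.1 = k) →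
          ∃ p : {pr // pr ∈ P1}, p ∈ T ∧ p.1.1 = k ∧ p.1.2 = c k := by
        intro k h
        refine ⟨h.choose, h.choose_spec.1, h.choose_spec.2, ?_⟩
        rw [hcdef]
        simp only [dif_pos h]
      have hcpiv : ∀ k, (¬ ∃ p : {pr // pr ∈ P1}, p ∈ T ∧ p.1.1 = k) → c k = piv k := by
        intro k h
        rw [hcdef]
        simp only [dif_neg h]
      have hadm : ∀ k, c k = piv k ∨ (k, c k) ∈ P1 := by
        intro k
        by_cases h : ∃ p : {pr // pr ∈ P1}, p ∈ T ∧ p.1.1 = k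
        · obtain ⟨p, hpT, hpk, hpc⟩ := hcspec k h
          right
          have hpp : (k, c k) = p.1 := Prod.ext hpk.symm hpc.symm
          rw [hpp]
          exact p.2
        · left; exact hcpiv k h
      have hinj : Function.Injective c := by
        intro a b hab
        by_contra hne'
        by_cases ha : ∃ p : {pr // pr ∈ P1}, p ∈ T ∧ p.1.1 = a
        · obtain ⟨p, hpT, hpa, hpc⟩ := hcspec a ha
          by_cases hb : ∃ q : {pr // pr ∈ P1}, q ∈ T ∧ q.1.1 = b
          · obtain ⟨q, hqT, hqb, hqc⟩ := hcspec b hb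
            have : p = q := hGood p hpT q hqT (Or.inr (by rw [hpc, hqc, hab]))
            exact hne' (by rw [← hpa, ← hqb, this])
          · have hcb : c b = piv b := hcpiv b hb
            have : c a ∉ Finset.image piv Finset.univ := by
              rw [← hpc]
              exact (hP1spec p).1
            exact this (by rw [hab, hcb]; exact Finset.mem_image_of_mem piv (Finset.mem_univ b))
        · have hca : c a = piv a := hcpiv a ha
          by_cases hb : ∃ q : {pr // pr ∈ P1}, q ∈ T ∧ q.1.1 = b
          · obtain ⟨q, hqT, hqb, hqc⟩ := hcspec b hb
            have : c b ∉ Finset.image piv Finset.univ := by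
              rw [← hqc]
              exact (hP1spec q).1
            exact this (by rw [← hab, hca]; exact Finset.mem_image_of_mem piv (Finset.mem_univ a))
          · have hcb : c b = piv b := hcpiv b hb
            exact hne' (hpiv.injective (by rw [← hca, ← hcb, hab]))
      have hTc : Finset.univ.filter (fun p : {pr // pr ∈ P1} => p.1.2 = c p.1.1) = T := by
        ext p
        simp only [Finset.mem_filter, Finset.mem_univ, true_and]
        constructor
        · intro hp
          by_cases h : ∃ q : {pr // pr ∈ P1}, q ∈ T ∧ q.1.1 = p.1.1
          · obtain ⟨q, hqT, hq1, hq2⟩ := hcspec p.1.1 h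
            have hpq : p = q := Subtype.ext (Prod.ext hq1.symm (by rw [hp, ← hq2]))
            rw [hpq]; exact hqT
          · refine absurd ?_ (hP1spec p).1
            rw [hp, hcpiv p.1.1 h]
            exact Finset.mem_image_of_mem piv (Finset.mem_univ p.1.1)
        · intro hp
          obtain ⟨q, hqT, hq1, hq2⟩ := hcspec p.1.1 ⟨p, hp, rfl⟩
          have hqp : q = p := hGood q hqT p hp (Or.inl hq1)
          rw [← hq2, ← hqp]
      refine ⟨c, Finset.mem_univ c, ?_, hTc⟩
      rw [hval c hadm hinj, hTc]
      exact hgne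
    · -- value identity
      intro c _ h₂
      obtain ⟨hadm, hinj⟩ := hne_adm c h₂
      exact hval c hadm hinj
  exact hL.trans key.symm
end
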